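/- If L is a countable dense linear order without endpoints, then every enumeration of L of order type ω is a nice enumeration of the structure (L, <). -/

import Mathlib

open Finset

/-- Dickson's lemma for pairs of naturals. -/
lemma dickson' (P Q : ℕ → ℕ) : ∃ i j : ℕ, i < j ∧ P i ≤ P j ∧ Q i ≤ Q j := by
  have h : (Set.univ : Set ℕ).IsPWO :=
    Set.IsWF.isPWO (Set.isWF_univ_iff.mpr inferInstance)
  obtain ⟨i, j, hij, hle⟩ := (h.prod h).exists_lt (f := fun n => (P n, Q n)) (fun n => by simp)
  exact ⟨i, j, hij, hle.1, hle.2⟩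

/-- Gluing two strictly monotone maps agreeing at a point. -/
lemma glueSM {α β : Type*} [LinearOrder α] [LinearOrder β] {f g : α → β} (a : α)
    (hf : StrictMono f) (hg : StrictMono g) (hfg : f a = g a) :
    StrictMono fun t => if t ≤ a then f t else g t := by
  intro s t hst
  dsimp only
  by_cases hs : s ≤ a
  · by_cases ht : t ≤ a
    · rw [if_pos hs, if_pos ht]; exact hf hst
    · rw [if_pos hs, if_neg ht]
      calc f s ≤ f a := hf.monotone hs
        _ = g a := hfg
        _ < g t := hg (lt_of_not_ge ht)
  · by_cases ht : t ≤ a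
    · exact absurd (hst.le.trans ht) hs
    · rw [if_neg hs, if_neg ht]; exact hg hst

/-- Any finite strictly monotone partial map of `ℚ` extends to a strictly
monotone self map. -/
lemma extQ : ∀ (n : ℕ) (x y : Fin n → ℚ), StrictMono x → StrictMono y →
    ∃ f : ℚ → ℚ, StrictMono f ∧ ∀ k, f (x k) = y k := by
  intro n
  induction n with
  | zero => exact fun x y _ _ => ⟨id, strictMono_id, fun k => k.elim0⟩
  | succ n ih =>
    intro x y hx hy
    rcases n with _ | m
    · refine ⟨fun t => t + (y 0 - x 0), fun s t hst => by simpa using hst, fun k => ?_⟩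
      have hk : k = 0 := Fin.ext (by omega)
      subst hk; ring
    · obtain ⟨f, hf, hfk⟩ := ih (x ∘ Fin.castSucc) (y ∘ Fin.castSucc)
        (hx.comp fun a b hab => Fin.castSucc_lt_castSucc_iff.mpr hab)
        (hy.comp fun a b hab => Fin.castSucc_lt_castSucc_iff.mpr hab)
      set u : ℚ := x ((Fin.last m).castSucc) with hu
      set u' : ℚ := x (Fin.last (m + 1)) with hu'
      set v : ℚ := y ((Fin.last m).castSucc) with hv
      set v' : ℚ := y (Fin.last (m + 1)) with hv'
      have huu' : u < u' := hx (Fin.castSucc_lt_last _)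
      have hvv' : v < v' := hy (Fin.castSucc_lt_last _)
      have hr : 0 < (v' - v) / (u' - u) := div_pos (by linarith) (by linarith)
      have hne : u' - u ≠ 0 := sub_ne_zero.2 (ne_of_gt huu')
      have hg : StrictMono (fun t => v + (t - u) * ((v' - v) / (u' - u))) := by
        intro s t h
        have := mul_lt_mul_of_pos_right (sub_lt_sub_right h u) hr
        simpa using this
      have hfu : f u = v := hfk (Fin.last m)
      refine ⟨fun t => if t ≤ u then f t else v + (t - u) * ((v' - v) / (u' - u)),
        glueSM u hf hg (by rw [hfu]; ring), fun k => ?_⟩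
      refine Fin.lastCases ?_ (fun j => ?_) k
      · have h1 : ¬ u' ≤ u := not_le.2 huu'
        show (if x (Fin.last (m + 1)) ≤ u then _ else _) = _
        rw [← hu', ← hv', if_neg h1]
        have hx2 : (u' - u) * ((v' - v) / (u' - u)) = v' - v := by
          field_simp
        linarith
      · have hle : x j.castSucc ≤ u :=
          hx.monotone (Fin.castSucc_le_castSucc_iff.mpr (Fin.le_last j))
        show (if x j.castSucc ≤ u then f (x j.castSucc) else _) = _
        rw [if_pos hle]
        exact hfk j

/-- Extension of finite strictly monotone partial maps in a countable dense
linear order without endpoints, via the order isomorphism with `ℚ`. -/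
lemma extL {L : Type*} [LinearOrder L] [DenselyOrdered L] [NoMinOrder L] [NoMaxOrder L]
    [Nonempty L] [Countable L] {n : ℕ} (x y : Fin n → L)
    (hx : StrictMono x) (hy : StrictMono y) :
    ∃ f : L ↪o L, ∀ k, f (x k) = y k := by
  obtain ⟨φ⟩ := Order.iso_of_countable_dense (α := L) (β := ℚ)
  obtain ⟨g, hg, hgk⟩ := extQ n (fun k => φ (x k)) (fun k => φ (y k))
    (φ.strictMono.comp hx) (φ.strictMono.comp hy)
  refine ⟨OrderEmbedding.ofStrictMono (fun t => φ.symm (g (φ t)))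
    (φ.symm.strictMono.comp (hg.comp φ.strictMono)), fun k => ?_⟩
  show φ.symm (g (φ (x k))) = y k
  rw [hgk k, OrderIso.symm_apply_apply]

/-- The piecewise enumeration of `A'`, then `v`, then `B'`. -/
def pieced2 {L : Type*} [LinearOrder L] (A' B' : Finset L) (v : L) (p q : ℕ)
    (hp : p ≤ A'.card) (hq : q ≤ B'.card) (k : Fin (p + 1 + q)) : L :=
  if h : (k : ℕ) < p then (A'.orderIsoOfFin rfl ⟨(k : ℕ), lt_of_lt_of_le h hp⟩ : L)
  else if _h2 : (k : ℕ) = p then v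
  else (B'.orderIsoOfFin rfl ⟨(k : ℕ) - (p + 1),
    lt_of_lt_of_le (by have := k.isLt; omega) hq⟩ : L)

lemma pieced2_left {L : Type*} [LinearOrder L] {A' B' : Finset L} {v : L} {p q : ℕ}
    {hp : p ≤ A'.card} {hq : q ≤ B'.card} {k : Fin (p + 1 + q)} (hk : (k : ℕ) < p) :
    pieced2 A' B' v p q hp hq k
      = (A'.orderIsoOfFin rfl ⟨(k : ℕ), lt_of_lt_of_le hk hp⟩ : L) := by
  unfold pieced2; rw [dif_pos hk]

lemma pieced2_mid {L : Type*} [LinearOrder L] {A' B' : Finset L} {v : L} {p q : ℕ}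
    {hp : p ≤ A'.card} {hq : q ≤ B'.card} {k : Fin (p + 1 + q)} (hk : (k : ℕ) = p) :
    pieced2 A' B' v p q hp hq k = v := by
  unfold pieced2; rw [dif_neg (by omega), dif_pos hk]

lemma pieced2_right {L : Type*} [LinearOrder L] {A' B' : Finset L} {v : L} {p q : ℕ}
    {hp : p ≤ A'.card} {hq : q ≤ B'.card} {k : Fin (p + 1 + q)}
    (hk1 : ¬ (k : ℕ) < p) (hk2 : ¬ (k : ℕ) = p) :
    pieced2 A' B' v p q hp hq k
      = (B'.orderIsoOfFin rfl ⟨(k : ℕ) - (p + 1),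
          lt_of_lt_of_le (by have := k.isLt; omega) hq⟩ : L) := by
  unfold pieced2; rw [dif_neg hk1, dif_neg hk2]

lemma pieced2_strictMono {L : Type*} [LinearOrder L] {A' B' : Finset L} {v : L} {p q : ℕ}
    (hp : p ≤ A'.card) (hq : q ≤ B'.card)
    (hA : ∀ c ∈ A', c < v) (hB : ∀ c ∈ B', v < c) :
    StrictMono (pieced2 A' B' v p q hp hq) := by
  intro k l hkl
  have hkl' : (k : ℕ) < (l : ℕ) := hkl
  have hk := k.isLt
  have hl := l.isLt
  by_cases h1 : (k : ℕ) < p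
  · rw [pieced2_left h1]
    by_cases h2 : (l : ℕ) < p
    · rw [pieced2_left h2]
      exact Subtype.coe_lt_coe.2 ((A'.orderIsoOfFin rfl).strictMono (Fin.mk_lt_mk.mpr hkl'))
    · by_cases h3 : (l : ℕ) = p
      · rw [pieced2_mid h3]; exact hA _ (Finset.coe_mem _)
      · rw [pieced2_right h2 h3]
        exact lt_trans (hA _ (Finset.coe_mem _)) (hB _ (Finset.coe_mem _))
  · by_cases h2 : (k : ℕ) = p
    · rw [pieced2_mid h2]
      rw [pieced2_right (by omega) (by omega : ¬ (l : ℕ) = p)]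
      exact hB _ (Finset.coe_mem _)
    · rw [pieced2_right h1 h2, pieced2_right (by omega) (by omega : ¬ (l : ℕ) = p)]
      exact Subtype.coe_lt_coe.2 ((B'.orderIsoOfFin rfl).strictMono (Fin.mk_lt_mk.mpr (by omega)))

/-- The key finite-injury step: mapping a finite configuration into another one. -/
lemma auxEmb {L : Type*} [LinearOrder L] [DenselyOrdered L] [NoMinOrder L] [NoMaxOrder L]
    [Nonempty L] [Countable L] (A B A' B' : Finset L) (u v : L)
    (hAu : ∀ c ∈ A, c < u) (hBu : ∀ c ∈ B, u < c)
    (hAv : ∀ c ∈ A', c < v) (hBv : ∀ c ∈ B', v < c)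
    (hp : A.card ≤ A'.card) (hq : B.card ≤ B'.card) :
    ∃ f : L ↪o L, f u = v ∧ (∀ c ∈ A, f c ∈ A') ∧ (∀ c ∈ B, f c ∈ B') := by
  obtain ⟨f, hf⟩ := extL (pieced2 A B u A.card B.card le_rfl le_rfl)
      (pieced2 A' B' v A.card B.card hp hq)
      (pieced2_strictMono le_rfl le_rfl hAu hBu)
      (pieced2_strictMono hp hq hAv hBv)
  refine ⟨f, ?_, ?_, ?_⟩
  · have h1 := hf ⟨A.card, by omega⟩
    rwa [pieced2_mid rfl, pieced2_mid rfl] at h1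
  · intro c hc
    obtain ⟨m, hmc⟩ : ∃ m : Fin A.card, ((A.orderIsoOfFin rfl) m : L) = c :=
      ⟨(A.orderIsoOfFin rfl).symm ⟨c, hc⟩, by rw [OrderIso.apply_symm_apply]⟩
    have hmlt : (m : ℕ) < A.card := m.isLt
    have h1 := hf ⟨(m : ℕ), by omega⟩
    rw [pieced2_left hmlt, pieced2_left hmlt] at h1
    simp only [Fin.eta] at h1
    rw [hmc] at h1
    rw [h1]
    exact Finset.coe_mem _
  · intro c hc
    obtain ⟨m, hmc⟩ : ∃ m : Fin B.card, ((B.orderIsoOfFin rfl) m : L) = c :=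
      ⟨(B.orderIsoOfFin rfl).symm ⟨c, hc⟩, by rw [OrderIso.apply_symm_apply]⟩
    have hmlt : (m : ℕ) < B.card := m.isLt
    have h1 := hf ⟨A.card + 1 + (m : ℕ), by omega⟩
    have e1 : ¬ (A.card + 1 + (m : ℕ) < A.card) := by omega
    have e2 : ¬ (A.card + 1 + (m : ℕ) = A.card) := by omega
    rw [pieced2_right e1 e2, pieced2_right e1 e2] at h1
    simp only [Fin.val_mk, Nat.add_sub_cancel_left, Fin.eta] at h1
    rw [hmc] at h1
    rw [h1]
    exact Finset.coe_mem _

/-- Calderoni–Evans observation. Let `(L, <)` be a countable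
dense linear order without endpoints (so `(L, <) ≅ ℚ`), and let `e : L ≃ ℕ` be
any enumeration of `L` of order type `ω`.  Then `e` is a nice enumeration of
the structure `(L, <)`: for every `e`-increasing sequence `(a i)` there are
`i < j` and a self-embedding `f` of the order `(L, <)` (an elementary map of
this structure) with `f (a i) = a j` which maps the `e`-initial segment below
`a i` into the `e`-initial segment below `a j`. -/
theorem stmt13 {L : Type*} [LinearOrder L] [DenselyOrdered L]
    [NoMinOrder L] [NoMaxOrder L] [Nonempty L]
    (e : L ≃ ℕ) (a : ℕ → L) (ha : StrictMono (fun i => e (a i))) :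
    ∃ i j : ℕ, i < j ∧ ∃ f : L ↪o L, f (a i) = a j ∧
      ∀ c : L, e c < e (a i) → e (f c) < e (a j) := by
  haveI : Countable L := Countable.of_equiv ℕ e.symm
  classical
  set S : ℕ → Finset L := fun n => (Finset.range (e (a n))).image (fun m => e.symm m) with hS
  have hmemS : ∀ n c, c ∈ S n ↔ e c < e (a n) := by
    intro n c
    simp only [hS, Finset.mem_image, Finset.mem_range]
    constructor
    · rintro ⟨m, hm, rfl⟩; simpa using hm
    · intro h; exact ⟨e c, h, by simp⟩
  set A : ℕ → Finset L := fun n => (S n).filter (fun c => c < a n) with hA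
  set B : ℕ → Finset L := fun n => (S n).filter (fun c => a n < c) with hB
  obtain ⟨i, j, hij, hpq⟩ := dickson' (fun n => (A n).card) (fun n => (B n).card)
  obtain ⟨f, hfu, hfA, hfB⟩ := auxEmb (A i) (B i) (A j) (B j) (a i) (a j)
    (fun c hc => (Finset.mem_filter.1 hc).2) (fun c hc => (Finset.mem_filter.1 hc).2)
    (fun c hc => (Finset.mem_filter.1 hc).2) (fun c hc => (Finset.mem_filter.1 hc).2)
    hpq.1 hpq.2
  refine ⟨i, j, hij, f, hfu, fun c hc => ?_⟩
  have hcS : c ∈ S i := (hmemS i c).2 hc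
  have hne : c ≠ a i := fun h => by rw [h] at hc; exact lt_irrefl _ hc
  rcases lt_or_gt_of_ne hne with h | h
  · have hcA : f c ∈ A j := hfA c (Finset.mem_filter.2 ⟨hcS, h⟩)
    exact (hmemS j (f c)).1 (Finset.mem_filter.1 hcA).1
  · have hcB : f c ∈ B j := hfB c (Finset.mem_filter.2 ⟨hcS, h⟩)
    exact (hmemS j (f c)).1 (Finset.mem_filter.1 hcB).1
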